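/- arXiv:1010.0232 — 3 statements merged into one kernel-verified Lean document; each statement's English description precedes it below -/
import Mathlib

section
/- For each 1 ≤ k ≤ N let c_k(x) denote the sequence (x_2, x_3, …, x_k, x_1, x_{k+1}, …, x_N) obtained by moving x_1 to position k. Then ∑_{k=1}^{N} f(c_k(x)) = f(x_1,…,x_N) · (∑_{i=1}^{N} x_i) / x_1. -/
open Finset

noncomputable section

/-- `tailProdInv N y = ∏_{p=1}^{N} (∑_{i=p}^{N} y_i)⁻¹`, the function `f` of the identity. -/
def tailProdInv {K : Type*} [Field K] (N : ℕ) (y : ℕ → K) : K :=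
  ∏ p ∈ Finset.Icc 1 N, (∑ i ∈ Finset.Icc p N, y i)⁻¹

/-- `moveToFront x k = (x_2, x_3, …, x_k, x_1, x_{k+1}, …, x_N)`: the sequence obtained from
`(x_1, …, x_N)` by moving `x_1` to position `k`. -/
def moveToFront {K : Type*} [Field K] (x : ℕ → K) (k : ℕ) : ℕ → K :=
  fun i => if i < k then x (i + 1) else if i = k then x 1 else x i

lemma tail_move_le {K : Type*} [Field K] (x : ℕ → K) {p k N : ℕ}
    (hpk : p ≤ k) (hkN : k ≤ N) :
    ∑ i ∈ Finset.Icc p N, moveToFront x k i = x 1 + ∑ i ∈ Finset.Icc (p+1) N, x i := by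
  rw [← Finset.Ico_add_one_right_eq_Icc, ← Finset.Ico_add_one_right_eq_Icc,
    ← Finset.sum_Ico_consecutive (moveToFront x k) hpk (by omega : k ≤ N + 1),
    Finset.sum_eq_sum_Ico_succ_bot (by omega : k < N + 1),
    ← Finset.sum_Ico_consecutive x (by omega : p + 1 ≤ k + 1) (by omega : k + 1 ≤ N + 1)]
  have h1 : ∑ i ∈ Finset.Ico p k, moveToFront x k i = ∑ i ∈ Finset.Ico (p+1) (k+1), x i := by
    rw [Finset.sum_Ico_eq_sum_range, Finset.sum_Ico_eq_sum_range,
      show k + 1 - (p + 1) = k - p from by omega]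
    refine Finset.sum_congr rfl fun i hi => ?_
    rw [Finset.mem_range] at hi
    have hik : p + i < k := by omega
    simp only [moveToFront, if_pos hik]
    congr 1
    omega
  have h2 : ∑ i ∈ Finset.Ico (k+1) (N+1), moveToFront x k i
      = ∑ i ∈ Finset.Ico (k+1) (N+1), x i := by
    refine Finset.sum_congr rfl fun i hi => ?_
    simp only [Finset.mem_Ico] at hi
    simp only [moveToFront]
    rw [if_neg (by omega), if_neg (by omega)]
  have h3 : moveToFront x k k = x 1 := by simp [moveToFront]
  rw [h1, h2, h3]; ring

lemma tail_move_gt {K : Type*} [Field K] (x : ℕ → K) {p k N : ℕ} (hk : k < p) :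
    ∑ i ∈ Finset.Icc p N, moveToFront x k i = ∑ i ∈ Finset.Icc p N, x i := by
  refine Finset.sum_congr rfl fun i hi => ?_
  simp only [Finset.mem_Icc] at hi
  simp only [moveToFront]
  rw [if_neg (by omega), if_neg (by omega)]

lemma tailProdInv_move {K : Type*} [Field K] (x : ℕ → K) {k N : ℕ}
    (h1 : 1 ≤ k) (hkN : k ≤ N) :
    tailProdInv N (moveToFront x k) =
      (∏ p ∈ Finset.Ico 1 (k+1), (x 1 + ∑ i ∈ Finset.Icc (p+1) N, x i)⁻¹) *
      ∏ p ∈ Finset.Ico (k+1) (N+1), (∑ i ∈ Finset.Icc p N, x i)⁻¹ := by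
  rw [tailProdInv, ← Finset.Ico_add_one_right_eq_Icc,
    ← Finset.prod_Ico_consecutive _ (by omega : 1 ≤ k + 1) (by omega : k + 1 ≤ N + 1)]
  congr 1
  · refine Finset.prod_congr rfl fun p hp => ?_
    simp only [Finset.mem_Ico] at hp
    rw [tail_move_le x (by omega) hkN]
  · refine Finset.prod_congr rfl fun p hp => ?_
    simp only [Finset.mem_Ico] at hp
    rw [tail_move_gt x (by omega)]

/-- The identity `∑_{k=1}^{N} f(c_k(x)) = f(x_1,…,x_N) · (∑_{i=1}^{N} x_i) / x_1`. -/
theorem sum_tailProdInv_moveToFront {K : Type*} [Field K] (N : ℕ) (hN : 1 ≤ N) (x : ℕ → K)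
    (hx1 : x 1 ≠ 0)
    (htail : ∀ p ∈ Finset.Icc 1 N, ∑ i ∈ Finset.Icc p N, x i ≠ 0)
    (hmix : ∀ p ∈ Finset.Icc 2 N, x 1 + ∑ i ∈ Finset.Icc p N, x i ≠ 0) :
    ∑ k ∈ Finset.Icc 1 N, tailProdInv N (moveToFront x k) =
      tailProdInv N x * (∑ i ∈ Finset.Icc 1 N, x i) / x 1 := by
  classical
  set T : ℕ → K := fun p => ∑ i ∈ Finset.Icc p N, x i with hTdef
  set S : ℕ → K := fun p => x 1 + T (p + 1) with hSdef
  have hTN1 : T (N + 1) = 0 := by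
    simp [hTdef, Finset.Icc_eq_empty_of_lt (Nat.lt_succ_self N)]
  have hTne : ∀ p, 1 ≤ p → p ≤ N → T p ≠ 0 := fun p h1 h2 =>
    htail p (Finset.mem_Icc.mpr ⟨h1, h2⟩)
  have hSne : ∀ q, 1 ≤ q → q ≤ N → S q ≠ 0 := by
    intro q hq1 hq2
    rcases eq_or_lt_of_le hq2 with rfl | h
    · simp only [hSdef, hTN1]
      simpa using hx1
    · exact hmix (q + 1) (Finset.mem_Icc.mpr ⟨by omega, by omega⟩)
  set D : ℕ → K := fun j => T (j + 1) * (∏ p ∈ Finset.Ico 1 (j+1), (S p)⁻¹) *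
      ∏ p ∈ Finset.Ico (j+1) (N+1), (T p)⁻¹ with hDdef
  have key : ∀ j, j < N → x 1 * tailProdInv N (moveToFront x (j+1)) = D j - D (j + 1) := by
    intro j hj
    rw [tailProdInv_move x (by omega) (by omega)]
    have hA : ∀ p, (x 1 + ∑ i ∈ Finset.Icc (p+1) N, x i)⁻¹ = (S p)⁻¹ := fun p => rfl
    have hA2 : ∀ p, (∑ i ∈ Finset.Icc p N, x i)⁻¹ = (T p)⁻¹ := fun p => rfl
    simp only [hA, hA2]
    have hsplit : ∏ p ∈ Finset.Ico (j+1) (N+1), (T p)⁻¹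
        = (T (j+1))⁻¹ * ∏ p ∈ Finset.Ico (j+1+1) (N+1), (T p)⁻¹ :=
      Finset.prod_eq_prod_Ico_succ_bot (by omega) _
    have htop : ∏ p ∈ Finset.Ico 1 (j+1+1), (S p)⁻¹
        = (∏ p ∈ Finset.Ico 1 (j+1), (S p)⁻¹) * (S (j+1))⁻¹ :=
      Finset.prod_Ico_succ_top (by omega) _
    rw [hDdef]
    simp only
    rw [hsplit, htop]
    have hT1 : T (j+1) ≠ 0 := hTne _ (by omega) (by omega)
    have hS1 : S (j+1) ≠ 0 := hSne _ (by omega) (by omega)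
    have hST : S (j+1) - T (j+1+1) = x 1 := by rw [hSdef]; ring
    generalize (∏ p ∈ Finset.Ico 1 (j+1), (S p)⁻¹) = A
    generalize (∏ p ∈ Finset.Ico (j+1+1) (N+1), (T p)⁻¹) = B
    rw [← hST]
    field_simp
  have hDN : D N = 0 := by
    simp [hDdef, hTN1]
  have hD0 : D 0 = T 1 * tailProdInv N x := by
    rw [hDdef]
    simp only [zero_add, Finset.Ico_self, Finset.prod_empty, mul_one]
    rw [tailProdInv, ← Finset.Ico_add_one_right_eq_Icc]
  have hmain : x 1 * ∑ k ∈ Finset.Icc 1 N, tailProdInv N (moveToFront x k) = D 0 - D N := by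
    rw [Finset.mul_sum, ← Finset.Ico_add_one_right_eq_Icc, Finset.sum_Ico_eq_sum_range,
      show N + 1 - 1 = N from by omega, ← Finset.sum_range_sub' D N]
    refine Finset.sum_congr rfl fun j hj => ?_
    rw [Finset.mem_range] at hj
    rw [show 1 + j = j + 1 from by omega]
    exact key j hj
  have hfin : x 1 * ∑ k ∈ Finset.Icc 1 N, tailProdInv N (moveToFront x k)
      = tailProdInv N x * (∑ i ∈ Finset.Icc 1 N, x i) := by
    rw [hmain, hDN, hD0, sub_zero, mul_comm]
  rw [eq_div_iff hx1, mul_comm]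
  exact hfin

end
end

section
/- The vector q = ∑_{C∈𝒞} q_C · e_C satisfies K q = (∑_{F∈𝒻} w_F) · q; that is, q is an eigenvector of the BHR transition operator with eigenvalue equal to the total weight λ_W = ∑_{F∈𝒻} w_F. -/
open Finset
open scoped Classical

noncomputable section

def faceMul {ι : Type*} (σ τ : ι → SignType) : ι → SignType :=
  fun i => if σ i = 0 then τ i else σ i

variable {ℓ : ℕ} {ι : Type*} [Fintype ι]

def IsFace (f : ι → ((Fin ℓ → ℝ) →ₗ[ℝ] ℝ)) (σ : ι → SignType) : Prop :=
  {x : Fin ℓ → ℝ | ∀ i, SignType.sign (f i x) = σ i}.Nonempty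

def IsChamber (f : ι → ((Fin ℓ → ℝ) →ₗ[ℝ] ℝ)) (σ : ι → SignType) : Prop :=
  IsFace f σ ∧ ∀ i, σ i ≠ 0

variable (f : ι → ((Fin ℓ → ℝ) →ₗ[ℝ] ℝ))

def Faces := {σ : ι → SignType // IsFace f σ}

def Chambers := {σ : ι → SignType // IsChamber f σ}

instance : Fintype (Faces f) := Subtype.fintype _
instance : Fintype (Chambers f) := Subtype.fintype _

variable (R : Type*) [CommRing R]

/-- The basis vector of the free module on chambers indexed by a sign vector:
`e σ = single σ 1` when `σ` is a chamber (and junk `0` otherwise). -/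
def eC (σ : ι → SignType) : Chambers f →₀ R :=
  if h : IsChamber f σ then Finsupp.single ⟨σ, h⟩ 1 else 0

/-- The linear action of a face `σ` on the free module on chambers: `e C ↦ e (σ∘C)`. -/
def faceAct (σ : ι → SignType) : (Chambers f →₀ R) →ₗ[R] (Chambers f →₀ R) :=
  Finsupp.lsum R fun C => LinearMap.toSpanSingleton R _ (eC f R (faceMul σ C.1))

/-- The BHR transition operator `K(e C) = ∑_F w_F • e (F∘C)`. -/
def transOp (w : Faces f → R) : (Chambers f →₀ R) →ₗ[R] (Chambers f →₀ R) :=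
  Finsupp.lsum R fun C =>
    LinearMap.toSpanSingleton R _ (∑ F : Faces f, w F • eC f R (faceMul F.1 C.1))

/-- The field of rational functions in the weight indeterminates `w_F`. -/
abbrev RatW := FractionRing (MvPolynomial (Faces f) ℝ)

/-- The weights as indeterminates in the field of rational functions. -/
def wt : Faces f → RatW f :=
  fun F => algebraMap (MvPolynomial (Faces f) ℝ) (RatW f) (MvPolynomial.X F)

/-- The condition that the iterated face product `F_{σ(1)} ∘ ⋯ ∘ F_{σ(N)}` equals `C`. -/
def prodCond {N : ℕ} (en : Fin N ≃ Faces f) (σ : Equiv.Perm (Fin N)) (C : ι → SignType) : Prop :=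
  (List.ofFn fun p => (en (σ p)).1).foldr faceMul 0 = C


/-- The coordinate `q_C = ∑_σ ∏_{p=1}^N (∑_{i=p}^N w_{F_{σ(i)}})⁻¹`, the sum being over all
permutations `σ` whose iterated face product equals `C`. -/
def qCoord {R : Type*} [Field R] {N : ℕ} (en : Fin N ≃ Faces f) (w : Faces f → R)
    (C : ι → SignType) : R :=
  ∑ σ ∈ univ.filter (fun σ : Equiv.Perm (Fin N) => prodCond f en σ C),
    ∏ p : Fin N, (∑ i ∈ Finset.Ici p, w (en (σ i)))⁻¹

/- ===== auxiliary lemmas for the proof ===== -/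

section PartA

variable {ι : Type*}

lemma faceMul_apply (σ τ : ι → SignType) (i : ι) :
    faceMul σ τ i = if σ i = 0 then τ i else σ i := rfl

lemma faceMul_idem (a b : ι → SignType) : faceMul a (faceMul a b) = faceMul a b := by
  funext i
  simp only [faceMul]
  split <;> simp_all

lemma foldr_faceMul_apply_cons (a : ι → SignType) (l : List (ι → SignType))
    (x : ι → SignType) (i : ι) :
    ((a :: l).foldr faceMul x) i = if a i = 0 then (l.foldr faceMul x) i else a i := rfl

lemma foldr_insertIdx_apply (a : ι → SignType) (i : ι) (ha : a i = 0) :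
    ∀ (k : ℕ) (l : List (ι → SignType)) (x : ι → SignType), k ≤ l.length →
      ((l.insertIdx k a).foldr faceMul x) i = (l.foldr faceMul x) i := by
  intro k
  induction k with
  | zero =>
    intro l x _
    rw [List.insertIdx_zero, foldr_faceMul_apply_cons, if_pos ha]
  | succ n ih =>
    intro l x hk
    cases l with
    | nil => simp at hk
    | cons b l =>
      rw [List.insertIdx_succ_cons, foldr_faceMul_apply_cons, foldr_faceMul_apply_cons]
      rw [ih l x (Nat.succ_le_succ_iff.mp hk)]

lemma faceMul_foldr_insertIdx (a : ι → SignType) (k : ℕ) (l : List (ι → SignType))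
    (hk : k ≤ l.length) :
    faceMul a ((l.insertIdx k a).foldr faceMul 0) = faceMul a (l.foldr faceMul 0) := by
  funext i
  simp only [faceMul_apply]
  split
  · next h => exact foldr_insertIdx_apply a i h k l 0 hk
  · rfl

lemma ofFn_cycleRange {α : Type*} {n : ℕ} (g : Fin (n + 1) → α) (k : Fin (n + 1)) :
    (List.ofFn fun p => g (Fin.cycleRange k p)) =
      (List.ofFn fun p : Fin n => g p.succ).insertIdx k.1 (g 0) := by
  have hk : (k : ℕ) ≤ (List.ofFn fun p : Fin n => g p.succ).length := by simp; omega
  apply List.ext_getElem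
  · rw [List.length_ofFn, List.length_insertIdx_of_le_length hk]
    simp
  · intro p h1 h2
    simp only [List.length_ofFn] at h1
    rw [List.getElem_ofFn]
    rcases lt_trichotomy p k.1 with hp | hp | hp
    · rw [List.getElem_insertIdx_of_lt hp (by rw [List.length_insertIdx_of_le_length hk]; simp; omega)]
      rw [List.getElem_ofFn]
      have hlt : (⟨p, h1⟩ : Fin (n+1)) < k := hp
      rw [Fin.cycleRange_of_lt hlt]
      congr 1
      apply Fin.ext
      rw [Fin.val_add_one_of_lt (by simp [Fin.lt_def]; omega : (⟨p, h1⟩ : Fin (n+1)) < Fin.last n)]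
      simp
    · subst hp
      have hpk : (⟨(k:ℕ), h1⟩ : Fin (n+1)) = k := Fin.ext rfl
      rw [hpk, Fin.cycleRange_self, List.getElem_insertIdx_self (by rw [List.length_insertIdx_of_le_length hk]; simp; omega)]
    · obtain ⟨m, rfl⟩ : ∃ m, p = k.1 + m + 1 := ⟨p - k.1 - 1, by omega⟩
      rw [List.getElem_insertIdx_add_succ _ _ _ _ (by simp; omega)]
      rw [List.getElem_ofFn]
      have hgt : k < (⟨k.1 + m + 1, h1⟩ : Fin (n+1)) := by simp only [Fin.lt_def]; omega
      rw [Fin.cycleRange_of_gt hgt]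
      congr 1

end PartA
set_option linter.unusedSectionVars false

section PartB

open Filter Topology

variable {ℓ : ℕ} {ι : Type*} [Fintype ι] {f : ι → ((Fin ℓ → ℝ) →ₗ[ℝ] ℝ)}

lemma isFace_zero : IsFace f 0 :=
  ⟨0, fun i => by simp⟩

lemma isFace_faceMul {σ τ : ι → SignType} (hσ : IsFace f σ) (hτ : IsFace f τ) :
    IsFace f (faceMul σ τ) := by
  obtain ⟨x, hx⟩ := hσ
  obtain ⟨y, hy⟩ := hτ
  have key : ∀ i, ∀ᶠ ε : ℝ in 𝓝[>] 0,
      SignType.sign (f i x + ε * f i y) = faceMul σ τ i := by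
    intro i
    by_cases h : σ i = 0
    · have hx0 : f i x = 0 := by
        have := hx i; rw [h] at this; exact sign_eq_zero_iff.mp this
      filter_upwards [self_mem_nhdsWithin] with ε (hε : ε ∈ Set.Ioi (0:ℝ))
      rw [hx0, zero_add, sign_mul, sign_pos hε, one_mul, hy i, faceMul_apply, if_pos h]
    · have hx0 : f i x ≠ 0 := by
        intro h0
        apply h
        rw [← hx i, h0, sign_zero]
      have ht : Tendsto (fun ε : ℝ => f i x + ε * f i y) (𝓝[>] 0) (𝓝 (f i x)) := by
        have : Tendsto (fun ε : ℝ => f i x + ε * f i y) (𝓝 0) (𝓝 (f i x + 0 * f i y)) := by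
          exact (tendsto_const_nhds.add ((continuous_id.mul continuous_const).tendsto 0))
        simpa using this.mono_left nhdsWithin_le_nhds
      have hgoal : faceMul σ τ i = SignType.sign (f i x) := by
        rw [faceMul_apply, if_neg h, ← hx i]
      rw [hgoal]
      rcases hx0.lt_or_gt with hneg | hpos
      · filter_upwards [ht.eventually (eventually_lt_nhds hneg)] with ε hε
        rw [sign_neg hε, sign_neg hneg]
      · filter_upwards [ht.eventually (eventually_gt_nhds hpos)] with ε hε
        rw [sign_pos hε, sign_pos hpos]
  obtain ⟨ε, hε⟩ := (Filter.eventually_all.mpr key).exists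
  exact ⟨x + ε • y, fun i => by simpa [map_add, map_smul, smul_eq_mul] using hε i⟩

lemma isFace_foldr {l : List (ι → SignType)} (hl : ∀ a ∈ l, IsFace f a) :
    IsFace f (l.foldr faceMul 0) := by
  induction l with
  | nil => exact isFace_zero
  | cons a l ih =>
    exact isFace_faceMul (hl a List.mem_cons_self)
      (ih fun b hb => hl b (List.mem_cons_of_mem a hb))

lemma foldr_apply_ne_zero {l : List (ι → SignType)} {i : ι} {x : ι → SignType}
    (h : ∃ a ∈ l, a i ≠ 0) : (l.foldr faceMul x) i ≠ 0 := by
  induction l with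
  | nil => simp at h
  | cons a l ih =>
    rw [foldr_faceMul_apply_cons]
    rcases h with ⟨b, hb, hbi⟩
    rcases List.mem_cons.mp hb with rfl | hb
    · rw [if_neg hbi]; exact hbi
    · split
      · exact ih ⟨b, hb, hbi⟩
      · assumption

lemma isChamber_faceMul {σ τ : ι → SignType} (hσ : IsFace f σ) (hτ : IsChamber f τ) :
    IsChamber f (faceMul σ τ) := by
  refine ⟨isFace_faceMul hσ hτ.1, fun i => ?_⟩
  rw [faceMul_apply]
  split
  · exact hτ.2 i
  · assumption

/-- the sign vector of a point is a face -/
lemma isFace_sign (x : Fin ℓ → ℝ) : IsFace f (fun i => SignType.sign (f i x)) :=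
  ⟨x, fun _ => rfl⟩

end PartB
section PartC

variable {ℓ : ℕ} {ι : Type*} [Fintype ι] {f : ι → ((Fin ℓ → ℝ) →ₗ[ℝ] ℝ)}

/-- the sequence product of all faces along a permutation -/
def prodSeq {N : ℕ} (en : Fin N ≃ Faces f) (σ : Equiv.Perm (Fin N)) : ι → SignType :=
  (List.ofFn fun p => (en (σ p)).1).foldr faceMul 0

lemma prodCond_iff {N : ℕ} (en : Fin N ≃ Faces f) (σ : Equiv.Perm (Fin N))
    (C : ι → SignType) : prodCond f en σ C ↔ prodSeq en σ = C := Iff.rfl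

lemma isChamber_prodSeq (hf : ∀ i, f i ≠ 0) {N : ℕ} (en : Fin N ≃ Faces f)
    (σ : Equiv.Perm (Fin N)) : IsChamber f (prodSeq en σ) := by
  constructor
  · exact isFace_foldr (by
      intro a ha
      rw [List.mem_ofFn] at ha
      obtain ⟨p, rfl⟩ := ha
      exact (en (σ p)).2)
  · intro i
    apply foldr_apply_ne_zero
    obtain ⟨x, hx⟩ : ∃ x, f i x ≠ 0 := by
      by_contra hc
      push_neg at hc
      exact hf i (LinearMap.ext fun x => by rw [hc x]; rfl)
    set F : Faces f := ⟨fun j => SignType.sign (f j x), isFace_sign x⟩ with hF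
    refine ⟨F.1, ?_, ?_⟩
    · rw [List.mem_ofFn]
      exact ⟨σ.symm (en.symm F), by simp⟩
    · simpa [hF] using fun h => hx (sign_eq_zero_iff.mp h)

lemma faceMul_prodSeq_cycleRange {n : ℕ} (en : Fin (n+1) ≃ Faces f)
    (σ : Equiv.Perm (Fin (n+1))) (k : Fin (n+1)) :
    faceMul (en (σ 0)).1 (prodSeq en (σ * Fin.cycleRange k)) = prodSeq en σ := by
  unfold prodSeq
  have h1 : (List.ofFn fun p => (en ((σ * Fin.cycleRange k) p)).1) =
      (List.ofFn fun p => ((fun q => (en (σ q)).1) (Fin.cycleRange k p))) := by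
    simp [Equiv.Perm.mul_apply]
  rw [h1, ofFn_cycleRange (fun q => (en (σ q)).1) k,
    faceMul_foldr_insertIdx _ _ _ (by simp; omega)]
  conv_rhs => rw [List.ofFn_succ]
  rfl

end PartC
section PartD

variable {ℓ : ℕ} {ι : Type*} [Fintype ι] {f : ι → ((Fin ℓ → ℝ) →ₗ[ℝ] ℝ)}

lemma sum_wt_ne_zero (S : Finset (Faces f)) (hS : S.Nonempty) :
    (∑ F ∈ S, wt f F) ≠ 0 := by
  intro h
  have hinj := IsFractionRing.injective (MvPolynomial (Faces f) ℝ) (RatW f)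
  unfold wt at h
  rw [← map_sum, ← map_zero (algebraMap (MvPolynomial (Faces f) ℝ) (RatW f))] at h
  have h2 := hinj h
  have h3 := congrArg (MvPolynomial.eval (fun _ => (1:ℝ))) h2
  rw [map_sum, map_zero] at h3
  simp only [MvPolynomial.eval_X] at h3
  rw [Finset.sum_const, nsmul_eq_mul, mul_one] at h3
  have := hS.card_pos
  exact_mod_cast absurd h3 (by positivity)

lemma tele {K : Type*} [Field K] (N : ℕ) (hN : 1 ≤ N) (a : K) (d : ℕ → K)
    (hdN : d N = 0) (hd : ∀ m, m < N → d m ≠ 0)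
    (ha : ∀ m, 1 ≤ m → m ≤ N → a + d m ≠ 0) :
    ∑ k ∈ Finset.range N, a * ∏ p ∈ Finset.range N, (if p ≤ k then a + d (p+1) else d p)⁻¹
      = d 0 * ∏ p ∈ Finset.range N, (d p)⁻¹ := by
  have ha0 : a ≠ 0 := by have := ha N hN le_rfl; rwa [hdN, add_zero] at this
  set A : ℕ → K := fun m =>
    (∏ p ∈ Finset.Ico 1 (m+1), (a + d p)⁻¹) * ∏ p ∈ Finset.Ico (m+1) N, (d p)⁻¹ with hA
  have hterm : ∀ k, k < N →
      a * ∏ p ∈ Finset.range N, (if p ≤ k then a + d (p+1) else d p)⁻¹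
        = a * (∏ p ∈ Finset.Ico 1 (k+2), (a + d p)⁻¹) * ∏ p ∈ Finset.Ico (k+1) N, (d p)⁻¹ := by
    intro k hk
    rw [Finset.range_eq_Ico, ← Finset.prod_Ico_consecutive _ (Nat.zero_le (k+1)) hk]
    have e1 : ∏ p ∈ Finset.Ico 0 (k+1), (if p ≤ k then a + d (p+1) else d p)⁻¹
        = ∏ p ∈ Finset.Ico 1 (k+2), (a + d p)⁻¹ := by
      rw [show (1:ℕ) = 0 + 1 from rfl, show k+2 = (k+1)+1 from rfl,
        ← Finset.prod_Ico_add' (fun p => (a + d p)⁻¹) 0 (k+1) 1]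
      apply Finset.prod_congr rfl
      intro p hp
      rw [Finset.mem_Ico] at hp
      rw [if_pos (by omega)]
    have e2 : ∏ p ∈ Finset.Ico (k+1) N, (if p ≤ k then a + d (p+1) else d p)⁻¹
        = ∏ p ∈ Finset.Ico (k+1) N, (d p)⁻¹ := by
      apply Finset.prod_congr rfl
      intro p hp
      rw [Finset.mem_Ico] at hp
      rw [if_neg (by omega)]
    rw [e1, e2, mul_assoc]
  have hstep : ∀ k, k + 1 < N →
      a * (∏ p ∈ Finset.Ico 1 (k+2), (a + d p)⁻¹) * ∏ p ∈ Finset.Ico (k+1) N, (d p)⁻¹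
        = A k - A (k+1) := by
    intro k hk
    have hsb : ∏ p ∈ Finset.Ico (k+1) N, (d p)⁻¹
        = (d (k+1))⁻¹ * ∏ p ∈ Finset.Ico (k+2) N, (d p)⁻¹ :=
      Finset.prod_eq_prod_Ico_succ_bot (by omega) _
    have hst : ∏ p ∈ Finset.Ico 1 (k+2), (a + d p)⁻¹
        = (∏ p ∈ Finset.Ico 1 (k+1), (a + d p)⁻¹) * (a + d (k+1))⁻¹ :=
      Finset.prod_Ico_succ_top (by omega) _
    rw [hA]
    simp only
    rw [hsb, hst]
    have h1 : d (k+1) ≠ 0 := hd _ (by omega)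
    have h2 : a + d (k+1) ≠ 0 := ha _ (by omega) (by omega)
    have hP : (∏ p ∈ Finset.Ico 1 (k+1), (a + d p)) ≠ 0 :=
      Finset.prod_ne_zero_iff.mpr fun x hx => by
        rw [Finset.mem_Ico] at hx; exact ha x hx.1 (by omega)
    have hQ : (∏ p ∈ Finset.Ico (k+2) N, d p) ≠ 0 :=
      Finset.prod_ne_zero_iff.mpr fun x hx => by
        rw [Finset.mem_Ico] at hx; exact hd x hx.2
    field_simp
    ring
  have hlast :
      a * (∏ p ∈ Finset.Ico 1 (N-1+2), (a + d p)⁻¹) * ∏ p ∈ Finset.Ico N N, (d p)⁻¹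
        = A (N-1) := by
    have hNN : N - 1 + 1 = N := by omega
    rw [Finset.Ico_self, Finset.prod_empty, mul_one]
    have : ∏ p ∈ Finset.Ico 1 (N-1+2), (a + d p)⁻¹
        = (∏ p ∈ Finset.Ico 1 N, (a + d p)⁻¹) * (a + d N)⁻¹ := by
      rw [show N-1+2 = N+1 by omega]
      exact Finset.prod_Ico_succ_top (by omega) _
    rw [this, hdN, add_zero, hA]
    simp only [hNN, Finset.Ico_self, Finset.prod_empty, mul_one]
    have hP : (∏ p ∈ Finset.Ico 1 N, (a + d p)) ≠ 0 :=
      Finset.prod_ne_zero_iff.mpr fun x hx => by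
        rw [Finset.mem_Ico] at hx; exact ha x hx.1 (by omega)
    field_simp
  calc ∑ k ∈ Finset.range N, a * ∏ p ∈ Finset.range N, (if p ≤ k then a + d (p+1) else d p)⁻¹
      = ∑ k ∈ Finset.range N,
          (a * (∏ p ∈ Finset.Ico 1 (k+2), (a + d p)⁻¹) * ∏ p ∈ Finset.Ico (k+1) N, (d p)⁻¹) := by
        apply Finset.sum_congr rfl
        intro k hk
        exact hterm k (Finset.mem_range.mp hk)
    _ = A 0 := by
        rw [show N = (N-1)+1 by omega, Finset.sum_range_succ]
        rw [show (N-1)+1 = N by omega, hlast]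
        have : ∑ k ∈ Finset.range (N-1),
            (a * (∏ p ∈ Finset.Ico 1 (k+2), (a + d p)⁻¹) * ∏ p ∈ Finset.Ico (k+1) N, (d p)⁻¹)
            = ∑ k ∈ Finset.range (N-1), (A k - A (k+1)) := by
          apply Finset.sum_congr rfl
          intro k hk
          exact hstep k (by have := Finset.mem_range.mp hk; omega)
        rw [this, Finset.sum_range_sub' A]
        ring
    _ = d 0 * ∏ p ∈ Finset.range N, (d p)⁻¹ := by
        rw [hA]
        simp only [Finset.Ico_self, Finset.prod_empty, one_mul, zero_add]
        rw [Finset.range_eq_Ico, Finset.prod_eq_prod_Ico_succ_bot hN]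
        rw [← mul_assoc, mul_inv_cancel₀ (hd 0 hN), one_mul]

end PartD
section PartE

variable {M : Type*} [AddCommMonoid M]

lemma image_cycleRange_Ici_of_le {n : ℕ} {p k : Fin (n+1)} (hpk : p ≤ k) :
    (Finset.Ici p).image (Fin.cycleRange k) =
      insert 0 (Finset.univ.filter fun j : Fin (n+1) => p.1 + 1 ≤ j.1) := by
  ext j
  simp only [Finset.mem_image, Finset.mem_Ici, Finset.mem_insert, Finset.mem_filter,
    Finset.mem_univ, true_and]
  constructor
  · rintro ⟨i, hpi, rfl⟩
    rcases lt_trichotomy i k with hik | rfl | hik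
    · right
      rw [Fin.cycleRange_of_lt hik,
        Fin.val_add_one_of_lt (lt_of_lt_of_le hik (Fin.le_last k))]
      have := Fin.le_def.mp hpi
      omega
    · left; exact Fin.cycleRange_self i
    · right
      rw [Fin.cycleRange_of_gt hik]
      have h1 := Fin.le_def.mp hpk
      have h2 := Fin.lt_def.mp hik
      omega
  · rintro (rfl | hj)
    · exact ⟨k, hpk, Fin.cycleRange_self k⟩
    · by_cases hjk : j.1 ≤ k.1
      · have hj1 : j.1 - 1 < n + 1 := by omega
        refine ⟨⟨j.1 - 1, hj1⟩, Fin.le_def.mpr (by simp; omega), ?_⟩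
        have hlt : (⟨j.1 - 1, hj1⟩ : Fin (n+1)) < k := Fin.lt_def.mpr (by simp; omega)
        rw [Fin.cycleRange_of_lt hlt]
        apply Fin.ext
        rw [Fin.val_add_one_of_lt (lt_of_lt_of_le hlt (Fin.le_last k))]
        simp
        omega
      · refine ⟨j, Fin.le_def.mpr (by omega), ?_⟩
        exact Fin.cycleRange_of_gt (Fin.lt_def.mpr (by omega))

lemma image_cycleRange_Ici_of_gt {n : ℕ} {p k : Fin (n+1)} (hpk : k < p) :
    (Finset.Ici p).image (Fin.cycleRange k) = Finset.Ici p := by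
  apply Finset.image_congr (g := id) ?_ |>.trans (Finset.image_id)
  intro i hi
  simp only [Finset.coe_Ici, Set.mem_Ici] at hi
  exact Fin.cycleRange_of_gt (lt_of_lt_of_le hpk hi)

lemma sum_Ici_cycleRange {n : ℕ} (c : Fin (n+1) → M) (p k : Fin (n+1)) :
    ∑ i ∈ Finset.Ici p, c (Fin.cycleRange k i) =
      if p ≤ k then
        c 0 + ∑ i ∈ Finset.univ.filter (fun i : Fin (n+1) => p.1 + 1 ≤ i.1), c i
      else ∑ i ∈ Finset.univ.filter (fun i : Fin (n+1) => p.1 ≤ i.1), c i := by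
  rw [← Finset.sum_image (fun i _ j _ h => (Fin.cycleRange k).injective h)]
  split
  · next hpk =>
    rw [image_cycleRange_Ici_of_le hpk, Finset.sum_insert (by
      simp only [Finset.mem_filter, Finset.mem_univ, Fin.val_zero, true_and]
      omega)]
  · next hpk =>
    rw [image_cycleRange_Ici_of_gt (not_le.mp hpk)]
    apply Finset.sum_congr ?_ (fun _ _ => rfl)
    ext i
    simp only [Finset.mem_Ici, Finset.mem_filter, Finset.mem_univ, true_and, Fin.le_def]

end PartE
section PartF

variable {K : Type*} [Field K]

lemma star_identity {n : ℕ} (c : Fin (n+1) → K)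
    (hc : ∀ A : Finset (Fin (n+1)), A.Nonempty → ∑ i ∈ A, c i ≠ 0) :
    ∑ k : Fin (n+1), c 0 * ∏ p : Fin (n+1),
        (∑ i ∈ Finset.Ici p, c (Fin.cycleRange k i))⁻¹
      = (∑ i, c i) * ∏ p : Fin (n+1), (∑ i ∈ Finset.Ici p, c i)⁻¹ := by
  set a : K := c 0 with ha
  set d : ℕ → K := fun m => ∑ i ∈ Finset.univ.filter (fun i : Fin (n+1) => m ≤ i.1), c i
    with hd
  have hIci : ∀ p : Fin (n+1), ∑ i ∈ Finset.Ici p, c i = d p.1 := by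
    intro p
    apply Finset.sum_congr ?_ (fun _ _ => rfl)
    ext i
    simp only [Finset.mem_Ici, Finset.mem_filter, Finset.mem_univ, true_and, Fin.le_def]
  have hd0 : ∑ i, c i = d 0 := by
    apply Finset.sum_congr ?_ (fun _ _ => rfl)
    ext i
    simp
  have hdN : d (n+1) = 0 := by
    show ∑ i ∈ Finset.univ.filter (fun i : Fin (n+1) => n+1 ≤ i.1), c i = 0
    rw [Finset.filter_false_of_mem (fun i _ => by have := i.isLt; omega), Finset.sum_empty]
  have hdne : ∀ m, m < n+1 → d m ≠ 0 := by
    intro m hm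
    exact hc _ ⟨⟨m, hm⟩, by simp⟩
  have hane : ∀ m, 1 ≤ m → m ≤ n+1 → a + d m ≠ 0 := by
    intro m h1 _
    have h0 : (0 : Fin (n+1)) ∉ Finset.univ.filter (fun i : Fin (n+1) => m ≤ i.1) := by
      simp only [Finset.mem_filter, Finset.mem_univ, Fin.val_zero, true_and]
      omega
    rw [ha, hd, ← Finset.sum_insert h0]
    exact hc _ ⟨0, Finset.mem_insert_self _ _⟩
  have hprod : ∀ k : Fin (n+1),
      ∏ p : Fin (n+1), (∑ i ∈ Finset.Ici p, c (Fin.cycleRange k i))⁻¹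
        = ∏ p ∈ Finset.range (n+1), (if p ≤ k.1 then a + d (p+1) else d p)⁻¹ := by
    intro k
    rw [← Fin.prod_univ_eq_prod_range (fun m => (if m ≤ k.1 then a + d (m+1) else d m)⁻¹)]
    apply Finset.prod_congr rfl
    intro p _
    rw [sum_Ici_cycleRange]
    congr 1
  calc ∑ k : Fin (n+1), c 0 * ∏ p : Fin (n+1), (∑ i ∈ Finset.Ici p, c (Fin.cycleRange k i))⁻¹
      = ∑ k ∈ Finset.range (n+1),
          a * ∏ p ∈ Finset.range (n+1), (if p ≤ k then a + d (p+1) else d p)⁻¹ := by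
        rw [← Fin.sum_univ_eq_sum_range
          (fun m => a * ∏ p ∈ Finset.range (n+1), (if p ≤ m then a + d (p+1) else d p)⁻¹)]
        exact Finset.sum_congr rfl fun k _ => by rw [hprod k, ha]
    _ = d 0 * ∏ p ∈ Finset.range (n+1), (d p)⁻¹ :=
        tele (n+1) (by omega) a d hdN hdne hane
    _ = (∑ i, c i) * ∏ p : Fin (n+1), (∑ i ∈ Finset.Ici p, c i)⁻¹ := by
        rw [hd0]
        congr 1
        rw [← Fin.prod_univ_eq_prod_range (fun m => (d m)⁻¹)]
        exact Finset.prod_congr rfl fun p _ => by rw [hIci p]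

end PartF
set_option maxHeartbeats 1000000

section PartG

variable {ℓ : ℕ} {ι : Type*} [Fintype ι] {f : ι → ((Fin ℓ → ℝ) →ₗ[ℝ] ℝ)}

lemma key (hf : ∀ i, f i ≠ 0) {n : ℕ} (en : Fin (n+1) ≃ Faces f) (D : Chambers f) :
    ∑ F : Faces f, ∑ C : Chambers f,
      (if faceMul F.1 C.1 = D.1 then wt f F * qCoord f en (wt f) C.1 else 0)
    = (∑ F : Faces f, wt f F) * qCoord f en (wt f) D.1 := by
  set w : Faces f → RatW f := wt f with hw
  set T : Equiv.Perm (Fin (n+1)) → RatW f :=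
    fun σ => ∏ p : Fin (n+1), (∑ i ∈ Finset.Ici p, w (en (σ i)))⁻¹ with hT
  have hq : ∀ X : ι → SignType, qCoord f en w X = ∑ σ : Equiv.Perm (Fin (n+1)),
      (if prodSeq en σ = X then T σ else 0) := by
    intro X
    rw [qCoord, Finset.sum_filter]
    simp only [prodCond_iff]
    rfl
  -- step a : collapse the chamber sum into a permutation sum
  have stepa : ∀ F : Faces f,
      (∑ C : Chambers f, if faceMul F.1 C.1 = D.1 then w F * qCoord f en w C.1 else 0)
        = ∑ τ : Equiv.Perm (Fin (n+1)),
            (if faceMul F.1 (prodSeq en τ) = D.1 then w F * T τ else 0) := by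
    intro F
    have expand : ∀ C : Chambers f,
        (if faceMul F.1 C.1 = D.1 then w F * qCoord f en w C.1 else 0)
          = ∑ τ : Equiv.Perm (Fin (n+1)),
              (if prodSeq en τ = C.1 ∧ faceMul F.1 C.1 = D.1 then w F * T τ else 0) := by
      intro C
      by_cases hP : faceMul F.1 C.1 = D.1
      · rw [if_pos hP, hq C.1, Finset.mul_sum]
        apply Finset.sum_congr rfl
        intro τ _
        by_cases hQ : prodSeq en τ = C.1
        · rw [if_pos hQ, if_pos ⟨hQ, hP⟩]
        · rw [if_neg hQ, if_neg (fun h => hQ h.1), mul_zero]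
      · rw [if_neg hP]
        exact (Finset.sum_eq_zero fun τ _ => if_neg (fun h => hP h.2)).symm
    rw [Finset.sum_congr rfl fun C _ => expand C, Finset.sum_comm]
    apply Finset.sum_congr rfl
    intro τ _
    have hC0 : IsChamber f (prodSeq en τ) := isChamber_prodSeq hf en τ
    have hsum := Fintype.sum_eq_single (⟨prodSeq en τ, hC0⟩ : Chambers f)
      (f := fun C : Chambers f =>
        if prodSeq en τ = C.1 ∧ faceMul F.1 C.1 = D.1 then w F * T τ else 0)
      (fun C hC => if_neg (fun h => hC (Subtype.ext h.1.symm)))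
    rw [hsum]
    show (if prodSeq en τ = prodSeq en τ ∧ faceMul F.1 (prodSeq en τ) = D.1
        then w F * T τ else 0) = _
    by_cases hR : faceMul F.1 (prodSeq en τ) = D.1
    · rw [if_pos ⟨rfl, hR⟩, if_pos hR]
    · rw [if_neg (fun h => hR h.2), if_neg hR]
  rw [Finset.sum_congr rfl fun F _ => stepa F]
  -- reindex faces by the enumeration
  rw [← Equiv.sum_comp en (fun F => ∑ τ : Equiv.Perm (Fin (n+1)),
      (if faceMul F.1 (prodSeq en τ) = D.1 then w F * T τ else 0))]
  -- the move-to-front bijection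
  have hck : ∀ (k : Fin (n+1)) (σ : Equiv.Perm (Fin (n+1))),
      (σ * Fin.cycleRange k)⁻¹ (σ 0) = k := by
    intro k σ
    rw [mul_inv_rev, Equiv.Perm.mul_apply, ← Equiv.Perm.mul_apply σ⁻¹ σ, inv_mul_cancel, Equiv.Perm.one_apply]
    exact Fin.cycleRange_symm_zero k
  let E : (Fin (n+1) × Equiv.Perm (Fin (n+1))) ≃ (Fin (n+1) × Equiv.Perm (Fin (n+1))) :=
  { toFun := fun x => (x.2 0, x.2 * Fin.cycleRange x.1)
    invFun := fun y => (y.2⁻¹ y.1, y.2 * (Fin.cycleRange (y.2⁻¹ y.1))⁻¹)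
    left_inv := by
      rintro ⟨k, σ⟩
      refine Prod.ext ?_ ?_
      · exact hck k σ
      · show (σ * Fin.cycleRange k) * (Fin.cycleRange ((σ * Fin.cycleRange k)⁻¹ (σ 0)))⁻¹ = σ
        rw [hck k σ, mul_inv_cancel_right]
    right_inv := by
      rintro ⟨j, τ⟩
      have h0 : (Fin.cycleRange (τ⁻¹ j))⁻¹ 0 = τ⁻¹ j := by
        rw [Equiv.Perm.inv_def]
        exact Fin.cycleRange_symm_zero _
      refine Prod.ext ?_ ?_
      · show (τ * (Fin.cycleRange (τ⁻¹ j))⁻¹) 0 = j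
        rw [Equiv.Perm.mul_apply, h0, ← Equiv.Perm.mul_apply τ τ⁻¹, mul_inv_cancel, Equiv.Perm.one_apply]
      · show τ * (Fin.cycleRange (τ⁻¹ j))⁻¹ * Fin.cycleRange (τ⁻¹ j) = τ
        rw [inv_mul_cancel_right] }
  have reindex : ∀ (g : Fin (n+1) → Equiv.Perm (Fin (n+1)) → RatW f),
      (∑ j : Fin (n+1), ∑ τ : Equiv.Perm (Fin (n+1)), g j τ)
        = ∑ σ : Equiv.Perm (Fin (n+1)), ∑ k : Fin (n+1),
            g (σ 0) (σ * Fin.cycleRange k) := by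
    intro g
    calc (∑ j : Fin (n+1), ∑ τ : Equiv.Perm (Fin (n+1)), g j τ)
        = ∑ x : Fin (n+1) × Equiv.Perm (Fin (n+1)), g x.1 x.2 :=
          (Fintype.sum_prod_type (f := fun x : Fin (n+1) × Equiv.Perm (Fin (n+1)) =>
            g x.1 x.2)).symm
      _ = ∑ x : Fin (n+1) × Equiv.Perm (Fin (n+1)), g ((E x).1) ((E x).2) :=
          (Equiv.sum_comp E (fun y : Fin (n+1) × Equiv.Perm (Fin (n+1)) => g y.1 y.2)).symm
      _ = ∑ k : Fin (n+1), ∑ σ : Equiv.Perm (Fin (n+1)), g (σ 0) (σ * Fin.cycleRange k) :=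
          (Fintype.sum_prod_type (f := fun x : Fin (n+1) × Equiv.Perm (Fin (n+1)) =>
            g ((E x).1) ((E x).2)))
      _ = ∑ σ : Equiv.Perm (Fin (n+1)), ∑ k : Fin (n+1), g (σ 0) (σ * Fin.cycleRange k) :=
          Finset.sum_comm
  rw [reindex (fun j τ => if faceMul (en j).1 (prodSeq en τ) = D.1 then w (en j) * T τ else 0)]
  -- rewrite each summand using the absorption identity
  have habs : ∀ (σ : Equiv.Perm (Fin (n+1))) (k : Fin (n+1)),
      (if faceMul (en (σ 0)).1 (prodSeq en (σ * Fin.cycleRange k)) = D.1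
        then w (en (σ 0)) * T (σ * Fin.cycleRange k) else 0)
      = (if prodSeq en σ = D.1
        then w (en (σ 0)) * T (σ * Fin.cycleRange k) else 0) := by
    intro σ k
    rw [faceMul_prodSeq_cycleRange en σ k]
  rw [Finset.sum_congr rfl fun σ _ => Finset.sum_congr rfl fun k _ => habs σ k]
  -- pull the condition out of the inner sum and apply the star identity
  have hstar : ∀ σ : Equiv.Perm (Fin (n+1)),
      ∑ k : Fin (n+1), w (en (σ 0)) * T (σ * Fin.cycleRange k)
        = (∑ F : Faces f, w F) * T σ := by
    intro σ
    set c : Fin (n+1) → RatW f := fun i => w (en (σ i)) with hc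
    have hcne : ∀ A : Finset (Fin (n+1)), A.Nonempty → ∑ i ∈ A, c i ≠ 0 := by
      intro A hA
      have hinj : ∀ x ∈ A, ∀ y ∈ A, en (σ x) = en (σ y) → x = y :=
        fun x _ y _ h => σ.injective (en.injective h)
      intro h0
      apply sum_wt_ne_zero (A.image (fun i => en (σ i))) (hA.image _)
      rw [Finset.sum_image hinj]
      exact h0
    have h1 : ∀ k : Fin (n+1), T (σ * Fin.cycleRange k)
        = ∏ p : Fin (n+1), (∑ i ∈ Finset.Ici p, c (Fin.cycleRange k i))⁻¹ := by
      intro k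
      rw [hT]
      simp only [Equiv.Perm.mul_apply]
      rfl
    have h2 : w (en (σ 0)) = c 0 := rfl
    calc ∑ k : Fin (n+1), w (en (σ 0)) * T (σ * Fin.cycleRange k)
        = ∑ k : Fin (n+1), c 0 * ∏ p : Fin (n+1),
            (∑ i ∈ Finset.Ici p, c (Fin.cycleRange k i))⁻¹ := by
          exact Finset.sum_congr rfl fun k _ => by rw [h1 k, h2]
      _ = (∑ i, c i) * ∏ p : Fin (n+1), (∑ i ∈ Finset.Ici p, c i)⁻¹ := star_identity c hcne
      _ = (∑ F : Faces f, w F) * T σ := by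
          congr 1
          exact Equiv.sum_comp (σ.trans en) w
  calc ∑ σ : Equiv.Perm (Fin (n+1)), ∑ k : Fin (n+1),
        (if prodSeq en σ = D.1 then w (en (σ 0)) * T (σ * Fin.cycleRange k) else 0)
      = ∑ σ : Equiv.Perm (Fin (n+1)),
          (if prodSeq en σ = D.1 then (∑ F : Faces f, w F) * T σ else 0) := by
        apply Finset.sum_congr rfl
        intro σ _
        by_cases hcond : prodSeq en σ = D.1
        · simp only [if_pos hcond]
          exact hstar σ
        · simp only [if_neg hcond, Finset.sum_const_zero]
    _ = (∑ F : Faces f, w F) * qCoord f en w D.1 := by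
        rw [hq D.1, Finset.mul_sum]
        apply Finset.sum_congr rfl
        intro σ _
        split <;> simp

end PartG

/-- The vector `q = ∑_C q_C • e_C` is an eigenvector of the BHR transition operator with
eigenvalue `λ_W = ∑_{F ∈ 𝒻} w_F`, over the field of rational functions in the weights. -/
theorem transOp_q_eq_totalWeight_smul {ℓ : ℕ} (hℓ : 1 ≤ ℓ) {ι : Type*} [Fintype ι] [Nonempty ι]
    (f : ι → ((Fin ℓ → ℝ) →ₗ[ℝ] ℝ)) (hf : ∀ i, f i ≠ 0)
    (hess : (⨅ i, LinearMap.ker (f i)) = ⊥)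
    (N : ℕ) (en : Fin N ≃ Faces f) :
    transOp f (RatW f) (wt f)
        (∑ C : Chambers f, Finsupp.single C (qCoord f en (wt f) C.1)) =
      (∑ F : Faces f, wt f F) •
        (∑ C : Chambers f, Finsupp.single C (qCoord f en (wt f) C.1)) := by
  obtain ⟨n, rfl⟩ : ∃ n, N = n + 1 := by
    cases N with
    | zero => exact (en.symm ⟨0, isFace_zero⟩).elim0
    | succ n => exact ⟨n, rfl⟩
  set w : Faces f → RatW f := wt f with hw
  set q : Chambers f → RatW f := fun C => qCoord f en (wt f) C.1 with hqdef
  have hsingle : ∀ (C : Chambers f) (r : RatW f),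
      transOp f (RatW f) w (Finsupp.single C r)
        = r • ∑ F : Faces f, w F • eC f (RatW f) (faceMul F.1 C.1) := by
    intro C r
    rw [transOp, Finsupp.lsum_single, LinearMap.toSpanSingleton_apply]
  have heC : ∀ (F : Faces f) (C : Chambers f),
      eC f (RatW f) (faceMul F.1 C.1)
        = Finsupp.single (⟨faceMul F.1 C.1, isChamber_faceMul F.2 C.2⟩ : Chambers f) 1 := by
    intro F C
    rw [eC, dif_pos (isChamber_faceMul F.2 C.2)]
    rfl
  rw [map_sum]
  ext D
  have hrhs : (∑ C : Chambers f, Finsupp.single C (q C)) D = q D := by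
    rw [Finsupp.finset_sum_apply]
    rw [Finset.sum_congr rfl (fun C _ => Finsupp.single_apply)]
    rw [Finset.sum_ite_eq' Finset.univ D q]
    rw [if_pos (Finset.mem_univ D)]
  calc (∑ C : Chambers f, transOp f (RatW f) w (Finsupp.single C (q C))) D
      = ∑ C : Chambers f, (transOp f (RatW f) w (Finsupp.single C (q C))) D :=
        Finsupp.finset_sum_apply _ _ _
    _ = ∑ C : Chambers f, ∑ F : Faces f,
          (if faceMul F.1 C.1 = D.1 then w F * q C else 0) := by
        apply Finset.sum_congr rfl
        intro C _
        rw [hsingle C (q C), Finsupp.smul_apply, Finsupp.finset_sum_apply]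
        rw [Finset.smul_sum]
        apply Finset.sum_congr rfl
        intro F _
        rw [heC F C]
        by_cases hFC : faceMul F.1 C.1 = D.1
        · have hsub : (⟨faceMul F.1 C.1, isChamber_faceMul F.2 C.2⟩ : Chambers f) = D :=
            Subtype.ext hFC
          rw [if_pos hFC]
          have e : ∀ E : Chambers f, E = D →
              q C • (w F • Finsupp.single E (1 : RatW f)) D = w F * q C := by
            intro E hE
            rw [Finsupp.smul_apply, Finsupp.single_apply, if_pos hE,
              smul_eq_mul, smul_eq_mul, mul_one, mul_comm]
          exact e _ hsub
        · have hsub : ¬ ((⟨faceMul F.1 C.1, isChamber_faceMul F.2 C.2⟩ : Chambers f) = D) :=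
            fun h => hFC (congrArg Subtype.val h)
          rw [if_neg hFC]
          have e : ∀ E : Chambers f, ¬ E = D →
              q C • (w F • Finsupp.single E (1 : RatW f)) D = 0 := by
            intro E hE
            rw [Finsupp.smul_apply, Finsupp.single_apply, if_neg hE,
              smul_zero, smul_zero]
          exact e _ hsub
    _ = ∑ F : Faces f, ∑ C : Chambers f,
          (if faceMul F.1 C.1 = D.1 then w F * q C else 0) := Finset.sum_comm
    _ = (∑ F : Faces f, w F) * q D := key hf en D
    _ = ((∑ F : Faces f, w F) • (∑ C : Chambers f, Finsupp.single C (q C))) D := by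
        rw [Finsupp.smul_apply, hrhs, smul_eq_mul]

end
end

section
/- (Varchenko–Gelfand) P_ℓ is the full space of functions 𝒞 → ℝ; that is, every real-valued function on the set of chambers is an ℝ-linear combination of the Heaviside monomials x_I, I ⊆ ι. -/
open Finset
open scoped Classical

noncomputable section

variable {ℓ : ℕ} {ι : Type*} [Fintype ι]

variable (f : ι → ((Fin ℓ → ℝ) →ₗ[ℝ] ℝ))

/-- The Heaviside function of the hyperplane `H_i`: value `1` on chambers on the positive
side of `H_i`, value `0` otherwise. -/
def heav (i : ι) : Chambers f → ℝ := fun C => if C.1 i = 1 then 1 else 0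

/-- The Heaviside monomial `x_I = ∏_{i ∈ I} x_i`. -/
def heavMon (I : Finset ι) : Chambers f → ℝ := fun C => ∏ i ∈ I, heav f i C

/-- The degree filtration `P_p`: the span of the Heaviside monomials of degree at most `p`. -/
def Pfil (p : ℕ) : Submodule ℝ (Chambers f → ℝ) :=
  Submodule.span ℝ {g | ∃ I : Finset ι, I.card ≤ p ∧ g = heavMon f I}

/-- Inclusion–exclusion expansion of `∏ (1 - x i)`. -/
lemma prod_one_sub' (s : Finset ι) (x : ι → ℝ) :
    ∏ i ∈ s, (1 - x i) = ∑ T ∈ s.powerset, (-1 : ℝ) ^ T.card * ∏ i ∈ T, x i := by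
  have h := Finset.prod_add (fun i => -x i) (fun _ => (1 : ℝ)) s
  simp only [Finset.prod_const_one, mul_one] at h
  calc ∏ i ∈ s, (1 - x i) = ∏ i ∈ s, (-x i + 1) :=
        Finset.prod_congr rfl fun i _ => by ring
    _ = ∑ T ∈ s.powerset, ∏ i ∈ T, -x i := h
    _ = ∑ T ∈ s.powerset, (-1 : ℝ) ^ T.card * ∏ i ∈ T, x i := by
        refine Finset.sum_congr rfl fun T _ => ?_
        rw [show (fun i => -x i) = (fun i => (-1 : ℝ) * x i) from funext fun i =>
          (neg_one_mul _).symm, Finset.prod_mul_distrib, Finset.prod_const]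

lemma heav01 (i : ι) (C : Chambers f) : heav f i C = 0 ∨ heav f i C = 1 := by
  unfold heav; split <;> simp

/-- The basic Varchenko–Gelfand vanishing relation coming from a linear dependency. -/
lemma vanish (a : ι → ℝ) (I : Finset ι) (ha : ∑ i ∈ I, a i • f i = 0)
    (hne : ∃ i ∈ I, a i ≠ 0) (C : Chambers f) :
    (∏ i ∈ I.filter (fun i => 0 < a i), heav f i C) *
      (∏ i ∈ I.filter (fun i => a i < 0), (1 - heav f i C)) = 0 := by
  by_contra h
  obtain ⟨x, hx⟩ := C.2.1
  have hPne := left_ne_zero_of_mul h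
  have hNne := right_ne_zero_of_mul h
  rw [Finset.prod_ne_zero_iff] at hPne hNne
  -- sign information
  have hsgnP : ∀ i ∈ I, 0 < a i → 0 < f i x := by
    intro i hi hai
    have h1 : heav f i C ≠ 0 := hPne i (Finset.mem_filter.mpr ⟨hi, hai⟩)
    have hC1 : C.1 i = 1 := by
      by_contra hc; exact h1 (by simp [heav, hc])
    have := hx i
    rw [hC1] at this
    exact sign_eq_one_iff.mp (by exact_mod_cast this)
  have hsgnN : ∀ i ∈ I, a i < 0 → f i x < 0 := by
    intro i hi hai
    have h1 : (1 : ℝ) - heav f i C ≠ 0 := hNne i (Finset.mem_filter.mpr ⟨hi, hai⟩)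
    have hC1 : C.1 i ≠ 1 := by
      intro hc; exact h1 (by simp [heav, hc])
    have hC0 := C.2.2 i
    have hCneg : C.1 i = -1 := by cases hc : C.1 i <;> simp_all
    have := hx i
    rw [hCneg] at this
    exact sign_eq_neg_one_iff.mp (by exact_mod_cast this)
  have hsum : ∑ i ∈ I, a i * f i x = 0 := by
    have := LinearMap.congr_fun ha x
    simpa [LinearMap.sum_apply, LinearMap.smul_apply, smul_eq_mul] using this
  have hpos : 0 < ∑ i ∈ I, a i * f i x := by
    obtain ⟨i0, hi0I, hi0⟩ := hne
    refine Finset.sum_pos' ?_ ⟨i0, hi0I, ?_⟩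
    · intro i hi
      rcases lt_trichotomy (a i) 0 with hlt | heq | hgt
      · exact le_of_lt (mul_pos_of_neg_of_neg hlt (hsgnN i hi hlt))
      · simp [heq]
      · exact le_of_lt (mul_pos hgt (hsgnP i hi hgt))
    · rcases lt_trichotomy (a i0) 0 with hlt | heq | hgt
      · exact mul_pos_of_neg_of_neg hlt (hsgnN i0 hi0I hlt)
      · exact absurd heq hi0
      · exact mul_pos hgt (hsgnP i0 hi0I hgt)
  rw [hsum] at hpos
  exact lt_irrefl 0 hpos

/-- Degree reduction: a monomial supported on a linearly dependent set of hyperplanes is a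
combination of strictly smaller monomials. -/
lemma reduce (I : Finset ι) (a : ι → ℝ) (ha : ∑ i ∈ I, a i • f i = 0)
    (hne : ∃ i ∈ I, a i ≠ 0) :
    heavMon f I ∈ Submodule.span ℝ {g | ∃ J : Finset ι, J ⊂ I ∧ g = heavMon f J} := by
  set N := I.filter (fun i => a i < 0) with hN
  have hNI : N ⊆ I := Finset.filter_subset _ _
  have hIN : (I \ N) ∪ N = I := by
    rw [Finset.sdiff_union_self_eq_union, Finset.union_eq_left.mpr hNI]
  have key : ∀ C, ∑ T ∈ N.powerset, (-1 : ℝ) ^ T.card * heavMon f ((I \ N) ∪ T) C = 0 := by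
    intro C
    have hv := vanish f a I ha hne C
    have hPsub : I.filter (fun i => 0 < a i) ⊆ I \ N := by
      intro i hi
      rw [Finset.mem_filter] at hi
      rw [Finset.mem_sdiff]
      exact ⟨hi.1, by simp [hN, Finset.mem_filter, hi.1, asymm hi.2]⟩
    have h1 : (∏ i ∈ I \ N, heav f i C) * ∏ i ∈ N, (1 - heav f i C) = 0 := by
      rw [← Finset.prod_sdiff hPsub, mul_assoc, hv, mul_zero]
    have expand : ∀ T ∈ N.powerset, heavMon f ((I \ N) ∪ T) C
        = (∏ i ∈ I \ N, heav f i C) * ∏ i ∈ T, heav f i C := by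
      intro T hT
      rw [Finset.mem_powerset] at hT
      exact Finset.prod_union ((Finset.sdiff_disjoint).mono_right hT)
    calc ∑ T ∈ N.powerset, (-1 : ℝ) ^ T.card * heavMon f ((I \ N) ∪ T) C
        = ∑ T ∈ N.powerset, (-1 : ℝ) ^ T.card *
            ((∏ i ∈ I \ N, heav f i C) * ∏ i ∈ T, heav f i C) :=
          Finset.sum_congr rfl fun T hT => by rw [expand T hT]
      _ = (∏ i ∈ I \ N, heav f i C) * ∏ i ∈ N, (1 - heav f i C) := by
          rw [prod_one_sub' N (fun i => heav f i C), Finset.mul_sum]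
          exact Finset.sum_congr rfl fun T _ => by ring
      _ = 0 := h1
  have split : ∀ C, (-1 : ℝ) ^ N.card * heavMon f I C +
      ∑ T ∈ N.powerset.erase N, (-1 : ℝ) ^ T.card * heavMon f ((I \ N) ∪ T) C = 0 := by
    intro C
    rw [← key C, ← Finset.add_sum_erase _ _ (Finset.mem_powerset_self N), hIN]
  have hsq : (-1 : ℝ) ^ N.card * (-1 : ℝ) ^ N.card = 1 := by
    rw [← pow_add]
    exact Even.neg_one_pow ⟨N.card, rfl⟩
  have hform : heavMon f I = ∑ T ∈ N.powerset.erase N,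
      ((-1 : ℝ) ^ (N.card + T.card + 1)) • heavMon f ((I \ N) ∪ T) := by
    funext C
    have h := split C
    have hRHS : (∑ T ∈ N.powerset.erase N,
        ((-1 : ℝ) ^ (N.card + T.card + 1)) • heavMon f ((I \ N) ∪ T)) C
        = ∑ T ∈ N.powerset.erase N,
            (-1 : ℝ) ^ (N.card + T.card + 1) * heavMon f ((I \ N) ∪ T) C := by
      simp [Finset.sum_apply]
    rw [hRHS]
    have hstep : ∑ T ∈ N.powerset.erase N,
        (-1 : ℝ) ^ (N.card + T.card + 1) * heavMon f ((I \ N) ∪ T) C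
        = (-1 : ℝ) ^ N.card * (-1) *
          ∑ T ∈ N.powerset.erase N, (-1 : ℝ) ^ T.card * heavMon f ((I \ N) ∪ T) C := by
      rw [Finset.mul_sum]
      refine Finset.sum_congr rfl fun T _ => ?_
      rw [pow_add, pow_add, pow_one]; ring
    rw [hstep]
    linear_combination ((-1 : ℝ) ^ N.card) * h - heavMon f I C * hsq
  rw [hform]
  refine Submodule.sum_mem _ fun T hT => Submodule.smul_mem _ _ (Submodule.subset_span ?_)
  refine ⟨(I \ N) ∪ T, ?_, rfl⟩
  rw [Finset.mem_erase, Finset.mem_powerset] at hT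
  have hTN : T.card < N.card :=
    Finset.card_lt_card (Finset.ssubset_iff_subset_ne.mpr ⟨hT.2, hT.1⟩)
  have hsub : (I \ N) ∪ T ⊆ I :=
    Finset.union_subset (Finset.sdiff_subset) (hT.2.trans hNI)
  have hcard : ((I \ N) ∪ T).card < I.card := by
    have h1 : ((I \ N) ∪ T).card ≤ (I \ N).card + T.card := Finset.card_union_le _ _
    have h2 : (I \ N).card = I.card - N.card := Finset.card_sdiff_of_subset hNI
    have h3 : N.card ≤ I.card := Finset.card_le_card hNI
    omega
  exact Finset.ssubset_iff_subset_ne.mpr ⟨hsub, fun he => absurd (he ▸ hcard) (lt_irrefl _)⟩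

/-- More than `ℓ` functionals on `ℝ^ℓ` are linearly dependent. -/
lemma exists_rel (I : Finset ι) (hI : ℓ < I.card) :
    ∃ a : ι → ℝ, ∑ i ∈ I, a i • f i = 0 ∧ ∃ i ∈ I, a i ≠ 0 := by
  have hnli : ¬ LinearIndependent ℝ (fun i : {x // x ∈ I} => f i.1) := by
    intro h
    have hle := h.fintype_card_le_finrank
    simp [Fintype.card_coe] at hle
    omega
  rw [Fintype.not_linearIndependent_iff] at hnli
  obtain ⟨g, hg, i0, hi0⟩ := hnli
  refine ⟨fun i => if h : i ∈ I then g ⟨i, h⟩ else 0, ?_, i0.1, i0.2, by simp [i0.2, hi0]⟩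
  rw [← Finset.sum_attach I (fun i => (if h : i ∈ I then g ⟨i, h⟩ else 0) • f i)]
  rw [← Finset.univ_eq_attach] at *
  rw [← hg]
  exact Finset.sum_congr rfl fun i _ => by simp [i.2]

/-- Every Heaviside monomial lies in `P_ℓ`. -/
lemma heavMon_mem (I : Finset ι) : heavMon f I ∈ Pfil f ℓ := by
  induction I using Finset.strongInduction with
  | _ I ih =>
    by_cases h : I.card ≤ ℓ
    · exact Submodule.subset_span ⟨I, h, rfl⟩
    · obtain ⟨a, ha, hne⟩ := exists_rel f I (lt_of_not_ge h)
      exact Submodule.span_le.mpr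
        (by rintro g ⟨J, hJ, rfl⟩; exact ih J hJ) (reduce f I a ha hne)

lemma delta_eq (C D : Chambers f) :
    (∏ i, (if C.1 i = 1 then heav f i D else 1 - heav f i D)) =
      if C = D then (1 : ℝ) else 0 := by
  split_ifs with h
  · subst h
    refine Finset.prod_eq_one fun i _ => ?_
    by_cases h1 : C.1 i = 1 <;> simp [heav, h1]
  · have : ∃ i, C.1 i ≠ D.1 i := by
      by_contra hc
      push_neg at hc
      exact h (Subtype.ext (funext hc))
    obtain ⟨i, hi⟩ := this
    apply Finset.prod_eq_zero (Finset.mem_univ i)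
    by_cases h1 : C.1 i = 1
    · rw [if_pos h1]
      have hD : D.1 i ≠ 1 := fun he => hi (h1.trans he.symm)
      simp [heav, hD]
    · rw [if_neg h1]
      have hC0 := C.2.2 i
      have hC : C.1 i = -1 := by cases hc : C.1 i <;> simp_all
      have hD0 := D.2.2 i
      have hD : D.1 i = 1 := by
        rw [hC] at hi
        cases hd : D.1 i <;> simp_all
      simp [heav, hD]

lemma delta_mem (C : Chambers f) :
    (fun D => if C = D then (1 : ℝ) else 0) ∈
      Submodule.span ℝ {g | ∃ I : Finset ι, g = heavMon f I} := by
  set A := Finset.univ.filter (fun i => C.1 i = 1) with hA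
  set B := Finset.univ.filter (fun i => ¬ C.1 i = 1) with hB
  have heq : (fun D => if C = D then (1 : ℝ) else 0)
      = ∑ T ∈ B.powerset, ((-1 : ℝ) ^ T.card) • heavMon f (A ∪ T) := by
    funext D
    rw [← delta_eq f C D]
    have hsplit : (∏ i, (if C.1 i = 1 then heav f i D else 1 - heav f i D))
        = (∏ i ∈ A, heav f i D) * ∏ i ∈ B, (1 - heav f i D) := by
      rw [← Finset.prod_filter_mul_prod_filter_not Finset.univ (fun i => C.1 i = 1)]
      congr 1
      · exact Finset.prod_congr rfl fun i hih => if_pos (Finset.mem_filter.mp hih).2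
      · exact Finset.prod_congr rfl fun i hih => if_neg (Finset.mem_filter.mp hih).2
    rw [hsplit, prod_one_sub' B (fun i => heav f i D), Finset.mul_sum]
    simp only [Finset.sum_apply, Pi.smul_apply, smul_eq_mul]
    refine Finset.sum_congr rfl fun T hT => ?_
    rw [Finset.mem_powerset] at hT
    have hdisj : Disjoint A T := by
      refine Finset.disjoint_left.mpr fun i hiA hiT => ?_
      have h1 := (Finset.mem_filter.mp hiA).2
      have h2 := (Finset.mem_filter.mp (hT hiT)).2
      exact h2 h1
    rw [heavMon, Finset.prod_union hdisj]; ring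
  rw [heq]
  exact Submodule.sum_mem _ fun T _ =>
    Submodule.smul_mem _ _ (Submodule.subset_span ⟨A ∪ T, rfl⟩)

lemma span_all_top :
    Submodule.span ℝ {g | ∃ I : Finset ι, g = heavMon f I} = (⊤ : Submodule ℝ (Chambers f → ℝ)) := by
  rw [Submodule.eq_top_iff']
  intro g
  have hg : g = ∑ C : Chambers f, g C • (fun D => if C = D then (1 : ℝ) else 0) := by
    funext D
    simp only [Finset.sum_apply, Pi.smul_apply, smul_eq_mul, mul_ite, mul_one, mul_zero]
    rw [Finset.sum_ite_eq' Finset.univ D g]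
    simp
  rw [hg]
  exact Submodule.sum_mem _ fun C _ => Submodule.smul_mem _ _ (delta_mem f C)

/-- (Varchenko–Gelfand) `P_ℓ` is the full space of functions on chambers: every real-valued
function on chambers is a linear combination of Heaviside monomials (of degree at most `ℓ`). -/
theorem Pfil_top {ℓ : ℕ} (hℓ : 1 ≤ ℓ) {ι : Type*} [Fintype ι] [Nonempty ι]
    (f : ι → ((Fin ℓ → ℝ) →ₗ[ℝ] ℝ)) (hf : ∀ i, f i ≠ 0)
    (hess : (⨅ i, LinearMap.ker (f i)) = ⊥) :
    Pfil f ℓ = ⊤ := by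
  refine le_antisymm le_top ?_
  rw [← span_all_top f]
  refine Submodule.span_le.mpr ?_
  rintro g ⟨I, rfl⟩
  exact heavMon_mem f I

end
end
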